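/- Let N ≥ 1, let ħ ≠ 0 be real, let λ₁, …, λ_N be real numbers, and let P : ℝ → M_N(ℂ) be such that P(t) is skew-Hermitian for every t. Suppose e₁, …, e_N : ℝ → ℂ^N are differentiable with de_k/dt = (1/ħ)·P(t)·e_k(t) for each k. Define W(t) = ∑_{k=1}^{N} (−i·λ_k)·e_k(t)·e_k(t)† (sum of scaled outer products, with (e e†)_{ij} = e_i · conj(e_j)). Then W is differentiable and dW/dt = −(1/ħ)·[W(t), P(t)], i.e., W solves the Euler–Zeitlin equation. -/

import Mathlib

open Matrix

/-- if the vectors `e_k` are advected by `ė_k = (1/ħ)·P·e_k` with `P(t)`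
skew-Hermitian, then `W(t) = ∑_k (-i·λ_k)·e_k(t)·e_k(t)†` is differentiable and solves the
Euler–Zeitlin equation `dW/dt = -(1/ħ)[W, P]` (both derivatives stated entrywise). -/
theorem outer_product_sum_solves_euler_zeitlin
    {N : ℕ} (hN : 1 ≤ N) (hbar : ℝ) (hbar_ne : hbar ≠ 0)
    (lam : Fin N → ℝ)
    (P : ℝ → Matrix (Fin N) (Fin N) ℂ) (hPskew : ∀ t : ℝ, (P t)ᴴ = -P t)
    (e : Fin N → ℝ → (Fin N → ℂ))
    (he : ∀ (k : Fin N) (t : ℝ) (i : Fin N),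
      HasDerivAt (fun s => e k s i) (((1 / hbar) • (P t *ᵥ e k t)) i) t)
    (W : ℝ → Matrix (Fin N) (Fin N) ℂ)
    (hWdef : ∀ t : ℝ, W t = ∑ k : Fin N,
      (-(Complex.I * (lam k : ℂ))) •
        Matrix.vecMulVec (e k t) (fun j => starRingEnd ℂ (e k t j))) :
    ∀ (t : ℝ) (i j : Fin N),
      HasDerivAt (fun s => W s i j) ((-(1 / hbar) • (W t * P t - P t * W t)) i j) t := by
  intro t i j
  have key : ∀ k : Fin N, HasDerivAt
      (fun s => (-(Complex.I * (lam k : ℂ))) * (e k s i * starRingEnd ℂ (e k s j)))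
      ((-(Complex.I * (lam k : ℂ))) *
        (((1 / hbar) • (P t *ᵥ e k t)) i * starRingEnd ℂ (e k t j)
          + e k t i * starRingEnd ℂ (((1 / hbar) • (P t *ᵥ e k t)) j))) t := by
    intro k
    have hc : HasDerivAt (fun s => starRingEnd ℂ (e k s j))
        (starRingEnd ℂ (((1 / hbar) • (P t *ᵥ e k t)) j)) t :=
      Complex.conjCLE.hasFDerivAt.comp_hasDerivAt t (he k t j)
    exact ((he k t i).mul hc).const_mul _
  have hsum := HasDerivAt.fun_sum (u := Finset.univ) (fun k _ => key k)
  have hfun : (fun s => ∑ k : Fin N,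
      (-(Complex.I * (lam k : ℂ))) * (e k s i * starRingEnd ℂ (e k s j)))
      = fun s => W s i j := by
    funext s
    simp [hWdef s, Matrix.sum_apply, Matrix.vecMulVec_apply, mul_assoc]
  rw [hfun] at hsum
  convert hsum using 1
  · rfl
  have hP : ∀ a b, starRingEnd ℂ (P t a b) = -P t b a := by
    intro a b
    have := congrFun (congrFun (hPskew t) b) a
    simpa [Matrix.conjTranspose_apply] using this
  simp only [hWdef t, Matrix.sub_apply, Matrix.smul_apply, Matrix.mul_apply,
    Matrix.sum_apply, Matrix.vecMulVec_apply, Matrix.mulVec, dotProduct,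
    Pi.smul_apply, Finset.sum_mul, Finset.mul_sum, smul_eq_mul, map_sum,
    _root_.map_mul, hP, Complex.ofReal_div, Complex.ofReal_one, smul_sub,
    Finset.sum_sub_distrib, mul_add, mul_sub, Complex.real_smul]
  simp only [map_div₀, _root_.map_one, Complex.conj_ofReal]
  rw [← Finset.sum_sub_distrib]
  refine Finset.sum_congr rfl fun x _ => ?_
  rw [← Finset.sum_sub_distrib, ← Finset.sum_add_distrib]
  refine Finset.sum_congr rfl fun y _ => ?_
  push_cast
  ring
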